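/- Sufficient decrease for proximal gradient descent: let f : ℝⁿ → ℝ be differentiable with ∇f L_f-Lipschitz, let φ : ℝⁿ → ℝ be M-weakly convex (M ∈ ℝ), let τ > 0, and set F = f + φ. Let (x_k) be a sequence in ℝⁿ such that for each k, x_{k+1} minimizes u ↦ φ(u) + (1/(2τ))‖u − (x_k − τ·∇f(x_k))‖² over ℝⁿ. Then for every k, F(x_k) ≥ F(x_{k+1}) + (1/τ − (M + L_f)/2)·‖x_k − x_{k+1}‖². In particular, if τ < 2/(M + L_f), the sequence (F(x_k)) is non-increasing. -/

import Mathlib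

open RealInnerProductSpace

variable {E : Type*} [NormedAddCommGroup E] [InnerProductSpace ℝ E] [CompleteSpace E]

lemma norm_combo_sq (a b : E) (t : ℝ) :
    ‖(1-t)•a + t•b‖^2 = (1-t)*‖a‖^2 + t*‖b‖^2 - t*(1-t)*‖a-b‖^2 := by
  simp only [← real_inner_self_eq_norm_sq, inner_add_add_self, inner_sub_sub_self,
    inner_smul_left, inner_smul_right, RCLike.ofReal_real_eq_id, id, conj_trivial]
  ring

lemma descent_lemma (f : E → ℝ) (f' : E → E) (L : ℝ)
    (hf : ∀ x, HasGradientAt f (f' x) x)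
    (hlip : ∀ u v, ‖f' u - f' v‖ ≤ L * ‖u - v‖) (x y : E) :
    f y ≤ f x + ⟪f' x, y - x⟫ + L/2 * ‖y - x‖^2 := by
  set d := y - x with hd
  have hline : ∀ t : ℝ, HasDerivAt (fun s : ℝ => x + s • d) d t := by
    intro t
    simpa using (HasDerivAt.const_add x ((hasDerivAt_id t).smul_const d))
  have hcomp : ∀ t : ℝ, HasDerivAt (fun s : ℝ => f (x + s • d)) ⟪f' (x + t • d), d⟫ t := by
    intro t
    exact ((hf (x + t • d)).hasFDerivAt.comp_hasDerivAt t (hline t))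
  set k : ℝ → ℝ := fun t => f (x + t • d) - t * ⟪f' x, d⟫ - L/2 * ‖d‖^2 * t^2 with hk
  have hkderiv : ∀ t : ℝ, HasDerivAt k (⟪f' (x + t • d), d⟫ - ⟪f' x, d⟫ - L * ‖d‖^2 * t) t := by
    intro t
    have h1 : HasDerivAt (fun s : ℝ => s * ⟪f' x, d⟫) ⟪f' x, d⟫ t := by
      simpa using (hasDerivAt_id t).mul_const ⟪f' x, d⟫
    have h2 : HasDerivAt (fun s : ℝ => L/2 * ‖d‖^2 * s^2) (L * ‖d‖^2 * t) t := by
      have := ((hasDerivAt_pow 2 t).const_mul (L/2 * ‖d‖^2))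
      refine this.congr_deriv ?_
      ring
    exact ((hcomp t).sub h1).sub h2
  have hanti : AntitoneOn k (Set.Icc (0:ℝ) 1) := by
    apply antitoneOn_of_deriv_nonpos (convex_Icc 0 1)
    · exact fun t _ => ((hkderiv t).continuousAt).continuousWithinAt
    · exact fun t _ => ((hkderiv t).differentiableAt).differentiableWithinAt
    · intro t ht
      rw [interior_Icc] at ht
      rw [(hkderiv t).deriv]
      have hcs : ⟪f' (x + t • d) - f' x, d⟫ ≤ ‖f' (x + t • d) - f' x‖ * ‖d‖ :=
        real_inner_le_norm _ _
      have hl : ‖f' (x + t • d) - f' x‖ ≤ L * (t * ‖d‖) := by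
        have := hlip (x + t • d) x
        simpa [norm_smul, abs_of_nonneg ht.1.le] using this
      have hinner : ⟪f' (x + t • d), d⟫ - ⟪f' x, d⟫ = ⟪f' (x + t • d) - f' x, d⟫ := by
        rw [inner_sub_left]
      rw [hinner]
      have hdn : (0:ℝ) ≤ ‖d‖ := norm_nonneg d
      nlinarith [mul_le_mul_of_nonneg_right hl hdn]
  have h01 : k 1 ≤ k 0 := hanti (Set.mem_Icc.2 ⟨le_refl 0, zero_le_one⟩)
    (Set.mem_Icc.2 ⟨zero_le_one, le_refl 1⟩) zero_le_one
  have h0 : k 0 = f x := by simp [hk, hd]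
  have h1 : k 1 = f y - ⟪f' x, d⟫ - L/2 * ‖d‖^2 := by simp [hk, hd]
  rw [h0, h1] at h01
  linarith

lemma prox_strong_min (φ : E → ℝ) (M τ : ℝ) (hτ : 0 < τ)
    (hφ : ConvexOn ℝ Set.univ (fun x => φ x + M / 2 * ‖x‖ ^ 2))
    (z p : E)
    (hp : ∀ u, φ p + 1/(2*τ)*‖p - z‖^2 ≤ φ u + 1/(2*τ)*‖u - z‖^2)
    (u : E) :
    φ p + 1/(2*τ)*‖p - z‖^2 + (1/τ - M)/2 * ‖u - p‖^2 ≤ φ u + 1/(2*τ)*‖u - z‖^2 := by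
  have step : ∀ t ∈ Set.Ioo (0:ℝ) 1,
      (1-t)*((1/τ - M)/2 * ‖u - p‖^2) ≤
        (φ u + 1/(2*τ)*‖u - z‖^2) - (φ p + 1/(2*τ)*‖p - z‖^2) := by
    intro t ht
    set m := (1-t) • p + t • u with hm
    have hconv := hφ.2 (Set.mem_univ p) (Set.mem_univ u)
      (by linarith [ht.2] : (0:ℝ) ≤ 1 - t) ht.1.le (by ring)
    simp only [smul_eq_mul] at hconv
    have hnm : ‖m‖^2 = (1-t)*‖p‖^2 + t*‖u‖^2 - t*(1-t)*‖p-u‖^2 := norm_combo_sq p u t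
    have hmz : m - z = (1-t) • (p - z) + t • (u - z) := by
      rw [hm]; module
    have hnmz : ‖m - z‖^2 = (1-t)*‖p-z‖^2 + t*‖u-z‖^2 - t*(1-t)*‖p-u‖^2 := by
      rw [hmz]
      have := norm_combo_sq (p - z) (u - z) t
      rw [show (p - z) - (u - z) = p - u by abel] at this
      exact this
    have hprox := hp m
    have hup : ‖u - p‖ = ‖p - u‖ := norm_sub_rev u p
    rw [← hm] at hconv
    have hA := add_le_add hprox hconv
    rw [hnm, hnmz] at hA
    have hc : 1/τ = 2*(1/(2*τ)) := by field_simp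
    have key : t * ((1-t)*((1/τ - M)/2 * ‖u - p‖^2)) ≤
        t * ((φ u + 1/(2*τ)*‖u - z‖^2) - (φ p + 1/(2*τ)*‖p - z‖^2)) := by
      rw [hup, hc]
      nlinarith [hA]
    exact le_of_mul_le_mul_left key ht.1
  have hlim : Filter.Tendsto (fun t : ℝ => (1-t)*((1/τ - M)/2 * ‖u - p‖^2))
      (nhdsWithin 0 (Set.Ioi 0)) (nhds ((1/τ - M)/2 * ‖u - p‖^2)) := by
    have : Filter.Tendsto (fun t : ℝ => (1-t)*((1/τ - M)/2 * ‖u - p‖^2))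
        (nhds 0) (nhds ((1-0)*((1/τ - M)/2 * ‖u - p‖^2))) := by
      exact ((continuous_const.sub continuous_id).mul continuous_const).tendsto 0
    simpa using this.mono_left nhdsWithin_le_nhds
  have hev : ∀ᶠ t in nhdsWithin (0:ℝ) (Set.Ioi 0),
      (1-t)*((1/τ - M)/2 * ‖u - p‖^2) ≤
        (φ u + 1/(2*τ)*‖u - z‖^2) - (φ p + 1/(2*τ)*‖p - z‖^2) :=
    Filter.eventually_of_mem (Ioo_mem_nhdsGT_of_mem ⟨le_refl 0, zero_lt_one⟩) step
  have := le_of_tendsto hlim hev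
  linarith

/-- Sufficient decrease for proximal gradient descent: for `f` differentiable
with `∇f` `L_f`-Lipschitz, `φ` `M`-weakly convex, `τ > 0`, `F = f + φ`, and `(x_k)` the PGD
iterates `x_{k+1} ∈ Prox_{τφ}(x_k − τ∇f(x_k))`, one has for every `k`
`F(x_k) ≥ F(x_{k+1}) + (1/τ − (M + L_f)/2)·‖x_k − x_{k+1}‖²`; in particular, if
`τ < 2/(M + L_f)` (stated as `τ·(M + L_f) < 2`), the sequence `(F(x_k))` is non-increasing. -/
theorem pgd_sufficient_decrease {n : ℕ}
    (f : EuclideanSpace ℝ (Fin n) → ℝ)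
    (f' : EuclideanSpace ℝ (Fin n) → EuclideanSpace ℝ (Fin n))
    (φ : EuclideanSpace ℝ (Fin n) → ℝ) (M L_f τ : ℝ)
    (hf : ∀ x, HasGradientAt f (f' x) x)
    (hlip : ∀ u v, ‖f' u - f' v‖ ≤ L_f * ‖u - v‖)
    (hφ : ConvexOn ℝ Set.univ (fun x => φ x + M / 2 * ‖x‖ ^ 2))
    (hτ : 0 < τ)
    (F : EuclideanSpace ℝ (Fin n) → ℝ) (hF : ∀ x, F x = f x + φ x)
    (x : ℕ → EuclideanSpace ℝ (Fin n))
    (hx : ∀ k, ∀ u,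
      φ (x (k + 1)) + 1 / (2 * τ) * ‖x (k + 1) - (x k - τ • f' (x k))‖ ^ 2 ≤
        φ u + 1 / (2 * τ) * ‖u - (x k - τ • f' (x k))‖ ^ 2) :
    (∀ k, F (x k) ≥ F (x (k + 1)) + (1 / τ - (M + L_f) / 2) * ‖x k - x (k + 1)‖ ^ 2) ∧
    (τ * (M + L_f) < 2 → ∀ k, F (x (k + 1)) ≤ F (x k)) := by
  have main : ∀ k, F (x k) ≥ F (x (k + 1)) + (1 / τ - (M + L_f) / 2) * ‖x k - x (k + 1)‖ ^ 2 := by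
    intro k
    have hps := prox_strong_min φ M τ hτ hφ (x k - τ • f' (x k)) (x (k+1)) (hx k) (x k)
    have hdes := descent_lemma f f' L_f hf hlip (x k) (x (k+1))
    have e1 : x k - (x k - τ • f' (x k)) = τ • f' (x k) := by abel
    have e2 : x (k+1) - (x k - τ • f' (x k)) = (x (k+1) - x k) + τ • f' (x k) := by abel
    rw [e1, e2] at hps
    have e3 : ‖(x (k+1) - x k) + τ • f' (x k)‖^2 =
        ‖x (k+1) - x k‖^2 + 2*(τ*⟪x (k+1) - x k, f' (x k)⟫) + ‖τ • f' (x k)‖^2 := by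
      rw [norm_add_sq_real, real_inner_smul_right]
    rw [e3] at hps
    have e4 : ⟪f' (x k), x (k+1) - x k⟫ = ⟪x (k+1) - x k, f' (x k)⟫ := real_inner_comm _ _
    rw [e4] at hdes
    have e5 : ‖x k - x (k+1)‖^2 = ‖x (k+1) - x k‖^2 := by rw [norm_sub_rev]
    have h2 : 1/(2*τ) * (2*(τ*⟪x (k+1) - x k, f' (x k)⟫)) = ⟪x (k+1) - x k, f' (x k)⟫ := by
      field_simp
    rw [hF (x k), hF (x (k+1)), e5]
    have h4 : 1/(2*τ)*‖x (k+1) - x k‖^2 = (1/τ)*‖x (k+1) - x k‖^2/2 := by ring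
    have h5 : 1/(2*τ)*‖τ • f' (x k)‖^2 = (1/τ)*‖τ • f' (x k)‖^2/2 := by ring
    have h6 : (1/τ - M)/2*‖x k - x (k+1)‖^2 = (1/τ - M)/2*‖x (k+1) - x k‖^2 := by rw [e5]
    linarith [hps, hdes, h2, h4, h5, h6]
  refine ⟨main, fun hτ2 k => ?_⟩
  have hML : (M + L_f) * τ < 2 := by linarith [hτ2]
  have h2τ : M + L_f < 2 / τ := (lt_div_iff₀ hτ).mpr hML
  have h2τ' : 2 / τ = 2 * (1 / τ) := by ring
  have hpos : 0 ≤ 1 / τ - (M + L_f) / 2 := by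
    rw [h2τ'] at h2τ; linarith
  have := main k
  nlinarith [mul_nonneg hpos (sq_nonneg ‖x k - x (k+1)‖)]
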